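/- Let K be a field in which n! is invertible. For any n+1 diagonal n×n matrices w_1,...,w_{n+1} with entries in a commutative K-algebra, the following identity holds: the sum over all set partitions λ = λ_1 ∪ ... ∪ λ_h of {1,...,n+1} of the product over i of (−1)(|λ_i|−1)! · Tr(∏_{s∈λ_i} w_s) equals zero. -/

import Mathlib

open Finset

namespace DiagTraceAux

variable {α β : Type*} [DecidableEq α] {A : Type*} [CommRing A]

private lemma prod_ite_all {ι : Type*} {s : Finset ι} {p : ι → Prop} [DecidablePred p]
    (c : ι → A) :
    (∏ i ∈ s, if p i then c i else 0) = if ∀ i ∈ s, p i then ∏ i ∈ s, c i else 0 := by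
  by_cases h : ∀ i ∈ s, p i
  · rw [if_pos h]
    exact Finset.prod_congr rfl fun i hi => if_pos (h i hi)
  · rw [if_neg h]
    push_neg at h
    obtain ⟨i, hi, hpi⟩ := h
    exact Finset.prod_eq_zero hi (if_neg hpi)

/-- Recursion for sums over finpartitions: classify by the block containing `a`. -/
private lemma sum_finpartition_rec {M : Type*} [AddCommMonoid M] (s : Finset α) (a : α)
    (ha : a ∈ s) (F : Finpartition s → M) :
    ∑ P : Finpartition s, F P =
      ∑ B ∈ (s.powerset.filter fun B => a ∈ B).attach,
        ∑ Q : Finpartition (s \ B.1),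
          F (Q.extend (Finset.nonempty_iff_ne_empty.mp ⟨a, (Finset.mem_filter.mp B.2).2⟩)
              Finset.sdiff_disjoint
              (sdiff_sup_cancel (Finset.mem_powerset.mp (Finset.mem_filter.mp B.2).1))) := by
  rw [← Finset.sum_fiberwise_of_maps_to (t := s.powerset.filter fun B => a ∈ B)
      (g := fun P : Finpartition s => P.part a)
      (fun P _ => Finset.mem_filter.mpr
        ⟨Finset.mem_powerset.mpr (P.le (P.part_mem.mpr ha)), P.mem_part ha⟩) F,
    ← Finset.sum_attach (s.powerset.filter fun B => a ∈ B)
      (fun B => ∑ P ∈ Finset.univ.filter fun P : Finpartition s => P.part a = B, F P)]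
  refine Finset.sum_congr rfl fun Bp _ => ?_
  obtain ⟨B, hB⟩ := Bp
  dsimp only
  obtain ⟨hBs', haB⟩ := Finset.mem_filter.mp hB
  have hBs : B ⊆ s := Finset.mem_powerset.mp hBs'
  have hBne : B ≠ ⊥ := Finset.nonempty_iff_ne_empty.mp ⟨a, haB⟩
  have key1 : ∀ P : Finpartition s, B ∈ P.parts →
      (P.avoid B).extend hBne Finset.sdiff_disjoint (sdiff_sup_cancel hBs) = P := by
    intro P hBp
    apply Finpartition.ext
    ext c
    simp only [Finpartition.extend_parts, Finset.mem_insert, Finpartition.mem_avoid]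
    constructor
    · rintro (rfl | ⟨d, hd, hdB, rfl⟩)
      · exact hBp
      · have hdis : Disjoint d B := P.disjoint hd hBp (by rintro rfl; exact hdB le_rfl)
        rwa [hdis.sdiff_eq_left]
    · intro hc
      by_cases h : c = B
      · exact Or.inl h
      · have hdis : Disjoint c B := P.disjoint hc hBp h
        refine Or.inr ⟨c, hc, fun hle => ?_, hdis.sdiff_eq_left⟩
        exact P.bot_notMem (by rwa [hdis.eq_bot_of_le hle] at hc)
  have key2 : ∀ Q : Finpartition (s \ B),
      (Q.extend hBne Finset.sdiff_disjoint (sdiff_sup_cancel hBs)).avoid B = Q := by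
    intro Q
    apply Finpartition.ext
    ext c
    simp only [Finpartition.mem_avoid, Finpartition.extend_parts, Finset.mem_insert]
    constructor
    · rintro ⟨d, (rfl | hd), hdB, rfl⟩
      · exact absurd le_rfl hdB
      · have hdis : Disjoint d B :=
          Finset.disjoint_of_subset_left (Q.le hd) Finset.sdiff_disjoint
        rwa [hdis.sdiff_eq_left]
    · intro hc
      have hdis : Disjoint c B :=
        Finset.disjoint_of_subset_left (Q.le hc) Finset.sdiff_disjoint
      exact ⟨c, Or.inr hc,
        fun hle => Q.bot_notMem (by rwa [hdis.eq_bot_of_le hle] at hc), hdis.sdiff_eq_left⟩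
  refine Finset.sum_nbij' (fun P => P.avoid B)
    (fun Q => Q.extend hBne Finset.sdiff_disjoint (sdiff_sup_cancel hBs))
    (fun P _ => Finset.mem_univ _) ?_ ?_ ?_ ?_
  · intro Q _
    refine Finset.mem_filter.mpr ⟨Finset.mem_univ _, Finpartition.part_eq_of_mem _ ?_ haB⟩
    rw [Finpartition.extend_parts]
    exact Finset.mem_insert_self _ _
  · intro P hP
    exact key1 P (by rw [← (Finset.mem_filter.mp hP).2]; exact P.part_mem.mpr ha)
  · intro Q _
    exact key2 Q
  · intro P hP
    exact (congrArg F (key1 P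
      (by rw [← (Finset.mem_filter.mp hP).2]; exact P.part_mem.mpr ha))).symm

/-- The block-level cancellation: sum over admissible blocks containing `a`. -/
private lemma sum_over_blocks [DecidableEq β] (f : α → β)
    [∀ b : Finset α, Decidable (∀ x ∈ b, ∀ y ∈ b, f x = f y)]
    (t : Finset α) (a : α) (ha : a ∈ t) :
    ∑ B ∈ t.powerset.filter (fun B => a ∈ B),
        (if ∀ x ∈ B, ∀ y ∈ B, f x = f y then -(((B.card - 1).factorial : ℕ) : A) else 0) *
          (if ∀ x ∈ t \ B, ∀ y ∈ t \ B, f x = f y → x = y then (-1 : A) ^ (t \ B).card else 0)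
      = if ∀ x ∈ t, ∀ y ∈ t, f x = f y → x = y then (-1 : A) ^ t.card else 0 := by
  by_cases hinj : ∀ x ∈ t, ∀ y ∈ t, f x = f y → x = y
  · rw [if_pos hinj,
      Finset.sum_eq_single_of_mem ({a} : Finset α)
        (Finset.mem_filter.mpr ⟨Finset.mem_powerset.mpr (Finset.singleton_subset_iff.mpr ha),
          Finset.mem_singleton_self a⟩)
        (by
          intro B hB hne
          obtain ⟨hBs', haB⟩ := Finset.mem_filter.mp hB
          have hBt := Finset.mem_powerset.mp hBs'
          by_cases hm : ∀ x ∈ B, ∀ y ∈ B, f x = f y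
          · exact absurd (Finset.eq_singleton_iff_unique_mem.mpr
              ⟨haB, fun x hx => hinj x (hBt hx) a (hBt haB) (hm x hx a haB)⟩) hne
          · rw [if_neg hm, zero_mul])]
    rw [if_pos (show ∀ x ∈ ({a} : Finset α), ∀ y ∈ ({a} : Finset α), f x = f y by simp),
      if_pos (show ∀ x ∈ t \ ({a} : Finset α), ∀ y ∈ t \ ({a} : Finset α), f x = f y → x = y
        from fun x hx y hy h =>
          hinj x (Finset.mem_sdiff.mp hx).1 y (Finset.mem_sdiff.mp hy).1 h),
      Finset.card_sdiff_of_subset (Finset.singleton_subset_iff.mpr ha), Finset.card_singleton]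
    have h1 : t.card - 1 + 1 = t.card := Nat.succ_pred_eq_of_pos (Finset.card_pos.mpr ⟨a, ha⟩)
    rw [← h1, pow_succ]
    norm_num [Nat.factorial]
  · rw [if_neg hinj]
    push_neg at hinj
    obtain ⟨u, hu, v, hv, hfuv, huv⟩ := hinj
    by_cases hout : ∀ x ∈ t, ∀ y ∈ t, f x ≠ f a → f x = f y → x = y
    swap
    · push_neg at hout
      obtain ⟨p, hp, q, hq, hpa, hpq, hpqne⟩ := hout
      refine Finset.sum_eq_zero fun B hB => ?_
      obtain ⟨hBs', haB⟩ := Finset.mem_filter.mp hB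
      by_cases hm : ∀ x ∈ B, ∀ y ∈ B, f x = f y
      · have hnB : ∀ x, f x ≠ f a → x ∈ t → x ∈ t \ B := fun x hx hxt =>
          Finset.mem_sdiff.mpr ⟨hxt, fun hxB => hx (hm x hxB a haB)⟩
        rw [if_neg (show ¬(∀ x ∈ t \ B, ∀ y ∈ t \ B, f x = f y → x = y) from fun h => hpqne
          (h p (hnB p hpa hp) q (hnB q (fun hq' => hpa (hpq.trans hq')) hq) hpq)), mul_zero]
      · rw [if_neg hm, zero_mul]
    · have hua : f u = f a := by
        by_contra h
        exact huv (hout u hu v hv h hfuv)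
      have hva : f v = f a := hfuv.symm.trans hua
      set F := t.filter fun x => f x = f a with hFdef
      have haF : a ∈ F := Finset.mem_filter.mpr ⟨ha, rfl⟩
      have hFt : F ⊆ t := Finset.filter_subset _ _
      have hmF : ∀ x ∈ F, f x = f a := fun x hx => (Finset.mem_filter.mp hx).2
      have hmonoF : ∀ x ∈ F, ∀ y ∈ F, f x = f y := fun x hx y hy =>
        (hmF x hx).trans (hmF y hy).symm
      have hm2 : 1 < F.card := Finset.one_lt_card.mpr
        ⟨u, Finset.mem_filter.mpr ⟨hu, hua⟩, v, Finset.mem_filter.mpr ⟨hv, hva⟩, huv⟩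
      have hmt : F.card ≤ t.card := Finset.card_le_card hFt
      have hinjc : ∀ B : Finset α, B ⊆ F → (∀ x ∈ F, x ∉ B → ∀ y ∈ F, y ∉ B → x = y) →
          ∀ x ∈ t \ B, ∀ y ∈ t \ B, f x = f y → x = y := by
        intro B _ hsmall x hx y hy hxy
        obtain ⟨hxt, hxB⟩ := Finset.mem_sdiff.mp hx
        obtain ⟨hyt, hyB⟩ := Finset.mem_sdiff.mp hy
        by_cases hxa : f x = f a
        · have hya : f y = f a := hxy.symm.trans hxa
          exact hsmall x (Finset.mem_filter.mpr ⟨hxt, hxa⟩) hxB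
            y (Finset.mem_filter.mpr ⟨hyt, hya⟩) hyB
        · exact hout x hxt y hyt hxa hxy
      have hED : insert F ((F.erase a).image fun z => F.erase z) ⊆
          t.powerset.filter fun B => a ∈ B := by
        intro B hB
        rcases Finset.mem_insert.mp hB with rfl | hB
        · exact Finset.mem_filter.mpr ⟨Finset.mem_powerset.mpr hFt, haF⟩
        · obtain ⟨z, hz, rfl⟩ := Finset.mem_image.mp hB
          obtain ⟨hza, _⟩ := Finset.mem_erase.mp hz
          exact Finset.mem_filter.mpr
            ⟨Finset.mem_powerset.mpr ((Finset.erase_subset _ _).trans hFt),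
              Finset.mem_erase.mpr ⟨Ne.symm hza, haF⟩⟩
      rw [← Finset.sum_subset hED (by
        intro B hB hBE
        obtain ⟨hBs', haB⟩ := Finset.mem_filter.mp hB
        have hBt := Finset.mem_powerset.mp hBs'
        by_cases hm : ∀ x ∈ B, ∀ y ∈ B, f x = f y
        swap
        · rw [if_neg hm, zero_mul]
        by_cases hc : ∀ x ∈ t \ B, ∀ y ∈ t \ B, f x = f y → x = y
        swap
        · rw [if_neg hc, mul_zero]
        exfalso
        apply hBE
        have hBF : B ⊆ F := fun x hx => Finset.mem_filter.mpr ⟨hBt hx, hm x hx a haB⟩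
        have hFB : (F \ B).card ≤ 1 := Finset.card_le_one.mpr (fun x hx y hy => by
          obtain ⟨hxF, hxB⟩ := Finset.mem_sdiff.mp hx
          obtain ⟨hyF, hyB⟩ := Finset.mem_sdiff.mp hy
          exact hc x (Finset.mem_sdiff.mpr ⟨hFt hxF, hxB⟩)
            y (Finset.mem_sdiff.mpr ⟨hFt hyF, hyB⟩)
            ((hmF x hxF).trans (hmF y hyF).symm))
        rcases Nat.le_one_iff_eq_zero_or_eq_one.mp hFB with h0 | h1
        · have hFB' : F ⊆ B := by
            intro x hx
            by_contra hxB
            have : x ∈ F \ B := Finset.mem_sdiff.mpr ⟨hx, hxB⟩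
            rw [Finset.card_eq_zero.mp h0] at this
            exact absurd this (Finset.notMem_empty x)
          rw [Finset.Subset.antisymm hBF hFB']
          exact Finset.mem_insert_self _ _
        · obtain ⟨z, hz⟩ := Finset.card_eq_one.mp h1
          have hzmem : z ∈ F \ B := hz ▸ Finset.mem_singleton_self z
          obtain ⟨hzF, hzB⟩ := Finset.mem_sdiff.mp hzmem
          have hza : z ≠ a := fun h => hzB (h ▸ haB)
          have hBez : B = F.erase z := by
            apply Finset.Subset.antisymm
            · intro x hx
              exact Finset.mem_erase.mpr ⟨fun h => hzB (h ▸ hx), hBF hx⟩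
            · intro x hx
              obtain ⟨hxz, hxF⟩ := Finset.mem_erase.mp hx
              by_contra hxB
              have : x ∈ F \ B := Finset.mem_sdiff.mpr ⟨hxF, hxB⟩
              rw [hz] at this
              exact hxz (Finset.mem_singleton.mp this)
          rw [hBez]
          exact Finset.mem_insert.mpr
            (Or.inr (Finset.mem_image.mpr ⟨z, Finset.mem_erase.mpr ⟨hza, hzF⟩, rfl⟩)))]
      have hFnotim : F ∉ (F.erase a).image fun z => F.erase z := by
        intro h
        obtain ⟨z, hz, hzz⟩ := Finset.mem_image.mp h
        have hcz := Finset.card_erase_of_mem (Finset.mem_of_mem_erase hz)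
        rw [hzz] at hcz
        omega
      rw [Finset.sum_insert hFnotim,
        Finset.sum_image (fun x hx _ _ h => (Finset.erase_inj F (Finset.mem_of_mem_erase hx)).mp h)]
      have htF : ∀ x ∈ t \ F, ∀ y ∈ t \ F, f x = f y → x = y := by
        intro x hx y hy hxy
        obtain ⟨hxt, hxF⟩ := Finset.mem_sdiff.mp hx
        have hxa : f x ≠ f a := fun h => hxF (Finset.mem_filter.mpr ⟨hxt, h⟩)
        exact hout x hxt y (Finset.mem_sdiff.mp hy).1 hxa hxy
      rw [if_pos hmonoF, if_pos htF]
      have herase : ∀ z ∈ F.erase a,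
          (if ∀ x ∈ F.erase z, ∀ y ∈ F.erase z, f x = f y then
              -((((F.erase z).card - 1).factorial : ℕ) : A) else 0) *
            (if ∀ x ∈ t \ F.erase z, ∀ y ∈ t \ F.erase z, f x = f y → x = y then
              (-1 : A) ^ (t \ F.erase z).card else 0)
          = -(((F.card - 2).factorial : ℕ) : A) * (-1 : A) ^ (t.card - F.card + 1) := by
        intro z hz
        obtain ⟨hza, hzF⟩ := Finset.mem_erase.mp hz
        have hmz : ∀ x ∈ F.erase z, ∀ y ∈ F.erase z, f x = f y := fun x hx y hy =>
          hmonoF x (Finset.mem_of_mem_erase hx) y (Finset.mem_of_mem_erase hy)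
        have hiz : ∀ x ∈ t \ F.erase z, ∀ y ∈ t \ F.erase z, f x = f y → x = y := by
          apply hinjc (F.erase z) (Finset.erase_subset _ _)
          intro x hxF hxB y hyF hyB
          have hx : x = z := by
            by_contra h; exact hxB (Finset.mem_erase.mpr ⟨h, hxF⟩)
          have hy : y = z := by
            by_contra h; exact hyB (Finset.mem_erase.mpr ⟨h, hyF⟩)
          rw [hx, hy]
        rw [if_pos hmz, if_pos hiz, Finset.card_erase_of_mem hzF,
          Finset.card_sdiff_of_subset ((Finset.erase_subset _ _).trans hFt),
          Finset.card_erase_of_mem hzF]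
        have e1 : F.card - 1 - 1 = F.card - 2 := by omega
        have e2 : t.card - (F.card - 1) = t.card - F.card + 1 := by omega
        rw [e1, e2]
      rw [Finset.sum_congr rfl herase, Finset.sum_const, Finset.card_erase_of_mem haF,
        Finset.card_sdiff_of_subset hFt]
      have hfac : (((F.card - 1).factorial : ℕ) : A)
          = ((F.card - 1 : ℕ) : A) * (((F.card - 2).factorial : ℕ) : A) := by
        rw [show F.card - 1 = (F.card - 2) + 1 by omega, Nat.factorial_succ]
        push_cast
        ring
      rw [nsmul_eq_mul, pow_succ, hfac]
      ring

/-- Möbius-type cancellation over monochromatic finpartitions. -/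
private lemma sum_finpartition_mono [DecidableEq β] (f : α → β)
    [∀ b : Finset α, Decidable (∀ x ∈ b, ∀ y ∈ b, f x = f y)]
    (t : Finset α) :
    ∑ P : Finpartition t, ∏ b ∈ P.parts,
        (if ∀ x ∈ b, ∀ y ∈ b, f x = f y then -(((b.card - 1).factorial : ℕ) : A) else 0)
      = if ∀ x ∈ t, ∀ y ∈ t, f x = f y → x = y then (-1 : A) ^ t.card else 0 := by
  induction t using Finset.strongInduction with
  | _ t ih =>
  rcases t.eq_empty_or_nonempty with rfl | ⟨a, ha⟩
  · haveI : Unique (Finpartition (∅ : Finset α)) :=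
      inferInstanceAs (Unique (Finpartition (⊥ : Finset α)))
    have hparts : (default : Finpartition (∅ : Finset α)).parts = ∅ :=
      Finset.eq_empty_of_forall_notMem fun b hb =>
        (Finpartition.nonempty_of_mem_parts _ hb).ne_empty
          (Finset.subset_empty.mp (Finpartition.le _ hb))
    rw [Finset.univ_unique, Finset.sum_singleton, hparts, Finset.prod_empty,
      if_pos (by simp), Finset.card_empty, pow_zero]
  · rw [sum_finpartition_rec t a ha]
    have step : ∀ B : {x // x ∈ t.powerset.filter fun B => a ∈ B},
        (∑ Q : Finpartition (t \ B.1), ∏ b ∈ (Q.extend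
            (Finset.nonempty_iff_ne_empty.mp ⟨a, (Finset.mem_filter.mp B.2).2⟩)
            Finset.sdiff_disjoint
            (sdiff_sup_cancel (Finset.mem_powerset.mp (Finset.mem_filter.mp B.2).1))).parts,
          (if ∀ x ∈ b, ∀ y ∈ b, f x = f y then -(((b.card - 1).factorial : ℕ) : A) else 0))
        = (if ∀ x ∈ B.1, ∀ y ∈ B.1, f x = f y
              then -(((B.1.card - 1).factorial : ℕ) : A) else 0) *
          (if ∀ x ∈ t \ B.1, ∀ y ∈ t \ B.1, f x = f y → x = y
              then (-1 : A) ^ (t \ B.1).card else 0) := by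
      rintro ⟨B, hB⟩
      obtain ⟨hBs', haB⟩ := Finset.mem_filter.mp hB
      have hBt : B ⊆ t := Finset.mem_powerset.mp hBs'
      have hBnotQ : ∀ Q : Finpartition (t \ B), B ∉ Q.parts := by
        intro Q h
        have := (Q.le h) haB
        exact absurd ((Finset.mem_sdiff.mp this).2) (fun hc => hc haB)
      calc (∑ Q : Finpartition (t \ B), ∏ b ∈ insert B Q.parts,
              (if ∀ x ∈ b, ∀ y ∈ b, f x = f y
                then -(((b.card - 1).factorial : ℕ) : A) else 0))
          = ∑ Q : Finpartition (t \ B),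
              (if ∀ x ∈ B, ∀ y ∈ B, f x = f y then -(((B.card - 1).factorial : ℕ) : A) else 0) *
              ∏ b ∈ Q.parts,
                (if ∀ x ∈ b, ∀ y ∈ b, f x = f y
                  then -(((b.card - 1).factorial : ℕ) : A) else 0) :=
            Finset.sum_congr rfl fun Q _ => Finset.prod_insert (hBnotQ Q)
        _ = _ := by
            rw [← Finset.mul_sum, ih (t \ B) (Finset.sdiff_ssubset hBt ⟨a, haB⟩)]
    rw [Finset.sum_congr rfl fun B _ => step B,
      Finset.sum_attach (t.powerset.filter fun B => a ∈ B) (fun B =>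
        (if ∀ x ∈ B, ∀ y ∈ B, f x = f y then -(((B.card - 1).factorial : ℕ) : A) else 0) *
        (if ∀ x ∈ t \ B, ∀ y ∈ t \ B, f x = f y → x = y then (-1 : A) ^ (t \ B).card else 0))]
    exact sum_over_blocks f t a ha

/-- Expand a product over the parts of a finpartition of `univ` of traces (sums over diagonal
indices) into a sum over colourings constant on parts. -/
private lemma prod_parts_sum [Fintype α] [DecidableEq β] [Fintype β]
    (P : Finpartition (Finset.univ : Finset α)) (w : α → β → A) :
    ∏ b ∈ P.parts, (∑ j : β, ∏ s ∈ b, w s j)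
      = ∑ f ∈ Finset.univ.filter
          (fun f : α → β => ∀ b ∈ P.parts, ∀ x ∈ b, ∀ y ∈ b, f x = f y),
          ∏ s, w s (f s) := by
  have key : ∀ (p : ∀ b ∈ P.parts, β) (b b' : Finset α) (hb : b ∈ P.parts)
      (hb' : b' ∈ P.parts), b = b' → p b hb = p b' hb' := by
    intro p b b' hb hb' h
    subst h
    rfl
  rw [Finset.prod_sum]
  refine Finset.sum_nbij'
    (fun p => fun s => p (P.part s) (P.part_mem.mpr (Finset.mem_univ s)))
    (fun f => fun b hb => f (P.nonempty_of_mem_parts hb).choose) ?_ ?_ ?_ ?_ ?_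
  · intro p _
    refine Finset.mem_filter.mpr ⟨Finset.mem_univ _, fun b hb x hx y hy => key p _ _ _ _ ?_⟩
    rw [P.part_eq_of_mem hb hx, P.part_eq_of_mem hb hy]
  · intro f _
    exact Finset.mem_pi.mpr fun b hb => Finset.mem_univ _
  · intro p _
    funext b hb
    exact key p _ _ _ _ (P.part_eq_of_mem hb (P.nonempty_of_mem_parts hb).choose_spec)
  · intro f hf
    funext s
    have h1 : P.part s ∈ P.parts := P.part_mem.mpr (Finset.mem_univ s)
    exact (Finset.mem_filter.mp hf).2 (P.part s) h1
      (P.nonempty_of_mem_parts h1).choose (P.nonempty_of_mem_parts h1).choose_spec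
      s (P.mem_part (Finset.mem_univ s))
  · intro p _
    have hcalc : ∀ x : {b // b ∈ P.parts}, (∏ s ∈ x.1, w s (p x.1 x.2))
        = ∏ s ∈ x.1, w s (p (P.part s) (P.part_mem.mpr (Finset.mem_univ s))) := by
      intro x
      refine Finset.prod_congr rfl fun s hs => ?_
      exact congrArg (w s) (key p _ _ _ _ (P.part_eq_of_mem x.2 hs).symm)
    calc (∏ x ∈ P.parts.attach, ∏ s ∈ x.1, w s (p x.1 x.2))
        = ∏ x ∈ P.parts.attach, ∏ s ∈ x.1,
            w s (p (P.part s) (P.part_mem.mpr (Finset.mem_univ s))) :=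
          Finset.prod_congr rfl fun x _ => hcalc x
      _ = ∏ b ∈ P.parts, ∏ s ∈ b,
            w s (p (P.part s) (P.part_mem.mpr (Finset.mem_univ s))) :=
          Finset.prod_attach P.parts (fun b => ∏ s ∈ b,
            w s (p (P.part s) (P.part_mem.mpr (Finset.mem_univ s))))
      _ = ∏ s ∈ P.parts.biUnion id,
            w s (p (P.part s) (P.part_mem.mpr (Finset.mem_univ s))) :=
          (Finset.prod_biUnion P.supIndep.pairwiseDisjoint).symm
      _ = ∏ s : α, w s (p (P.part s) (P.part_mem.mpr (Finset.mem_univ s))) := by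
          rw [P.biUnion_parts]

end DiagTraceAux

/-- The fundamental trace identity specialized to diagonal matrices: if `n!` is invertible
in the field `K`, then for any `n+1` diagonal `n × n` matrices over a commutative
`K`-algebra `A` (given by their diagonal entry vectors `w s : Fin n → A`), the sum over
all set partitions `λ` of `{1, ..., n+1}` of `∏_i (−1)·(|λ_i|−1)! · Tr(∏_{s ∈ λ_i} w s)`
vanishes. -/
theorem diagonal_fundamental_trace_identity
    (K : Type*) [Field K] {A : Type*} [CommRing A] [Algebra K A] (n : ℕ)
    (hn : IsUnit (n.factorial : K))
    (w : Fin (n + 1) → Fin n → A) :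
    ∑ P : Finpartition (Finset.univ : Finset (Fin (n + 1))),
      ∏ b ∈ P.parts,
        ((-1 : A) * (b.card - 1).factorial * ∑ j : Fin n, ∏ s ∈ b, w s j) = 0 := by
  have hcard : ∀ f : Fin (n + 1) → Fin n,
      ¬ (∀ x ∈ (Finset.univ : Finset (Fin (n + 1))), ∀ y ∈ Finset.univ, f x = f y → x = y) := by
    intro f hf
    have hinj : Function.Injective f := fun x y h =>
      hf x (Finset.mem_univ x) y (Finset.mem_univ y) h
    have := Fintype.card_le_of_injective f hinj
    simp only [Fintype.card_fin] at this
    omega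
  have step1 : ∀ P : Finpartition (Finset.univ : Finset (Fin (n + 1))),
      (∏ b ∈ P.parts, ((-1 : A) * (b.card - 1).factorial * ∑ j : Fin n, ∏ s ∈ b, w s j))
      = ∑ f : Fin (n + 1) → Fin n,
          (∏ b ∈ P.parts, if ∀ x ∈ b, ∀ y ∈ b, f x = f y
            then -(((b.card - 1).factorial : ℕ) : A) else 0) * ∏ s, w s (f s) := by
    intro P
    have e1 : (∏ b ∈ P.parts, ((-1 : A) * (b.card - 1).factorial * ∑ j : Fin n, ∏ s ∈ b, w s j))
        = (∏ b ∈ P.parts, -(((b.card - 1).factorial : ℕ) : A)) *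
          ∏ b ∈ P.parts, ∑ j : Fin n, ∏ s ∈ b, w s j := by
      rw [← Finset.prod_mul_distrib]
      exact Finset.prod_congr rfl fun b _ => by ring
    rw [e1, DiagTraceAux.prod_parts_sum P w, Finset.mul_sum, Finset.sum_filter]
    refine Finset.sum_congr rfl fun f _ => ?_
    rw [DiagTraceAux.prod_ite_all]
    by_cases h : ∀ b ∈ P.parts, ∀ x ∈ b, ∀ y ∈ b, f x = f y
    · rw [if_pos h, if_pos h]
    · rw [if_neg h, if_neg h, zero_mul]
  rw [Finset.sum_congr rfl fun P _ => step1 P, Finset.sum_comm]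
  refine Finset.sum_eq_zero fun f _ => ?_
  have hM := DiagTraceAux.sum_finpartition_mono (A := A) f (Finset.univ : Finset (Fin (n + 1)))
  rw [if_neg (hcard f)] at hM
  rw [← Finset.sum_mul, hM, zero_mul]
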